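/- Let n ≥ 2 be an integer and fix 1 ≤ k ≤ n−1. Let y₁ ≤ y₂ ≤ … ≤ yₙ be real numbers and let t₁,…,tₙ be real numbers (not necessarily nonnegative) with Σ_{i=1}^n tᵢ = 1 and Σ_{i=1}^n tᵢyᵢ = 0, satisfying: 0 ≤ Σ_{i=1}^{j} tᵢ ≤ 1 for all 1 ≤ j ≤ n; Σ_{i=1}^{j} tᵢ ≤ Σ_{i=1}^{k} tᵢ for all j ≤ k; t_{k+1} > 0; 0 ≤ Σ_{i=k+1}^{l} tᵢ ≤ Σ_{i=k+1}^{n} tᵢ for all k+1 ≤ l ≤ n; and 0 < P_k < 1 where P_k := Σ_{i=1}^{k} tᵢ. Then for every real r ≥ 1, |Σ_{i=1}^{k} tᵢyᵢ / P_k| ≤ ( Σ_{i=1}^n tᵢ|yᵢ|^{2r} / ( P_k + P_k^{2r}·(1−P_k)^{1−2r} ) )^{1/(2r)}. -/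

import Mathlib

lemma tele_aux (g : ℕ → ℝ) (l N : ℕ) (hl : l ≤ N) :
    ∑ i ∈ Finset.Ico l N, (g (i+1) - g i) = g N - g l := by
  induction N, hl using Nat.le_induction with
  | base => simp
  | succ N hN ih => rw [Finset.sum_Ico_succ_top hN, ih]; ring

lemma abelF (t g : ℕ → ℝ) (M : ℕ) :
    ∑ i ∈ Finset.range (M+1), t i * g i
      = (∑ i ∈ Finset.range (M+1), t i) * g M
        - ∑ i ∈ Finset.range M, (∑ j ∈ Finset.range (i+1), t j) * (g (i+1) - g i) := by
  induction M with
  | zero => simp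
  | succ M ih =>
      rw [Finset.sum_range_succ (fun i => t i * g i), ih,
        Finset.sum_range_succ (fun i => (∑ j ∈ Finset.range (i+1), t j) * (g (i+1) - g i)),
        Finset.sum_range_succ t (M+1), Finset.sum_range_succ t M]
      ring

lemma abelB (t g : ℕ → ℝ) (l N : ℕ) (hl : l ≤ N) :
    ∑ i ∈ Finset.Ico l (N+1), t i * g i
      = (∑ i ∈ Finset.range (N+1), t i - ∑ i ∈ Finset.range l, t i) * g l
        + ∑ i ∈ Finset.Ico l N,
            (∑ j ∈ Finset.range (N+1), t j - ∑ j ∈ Finset.range (i+1), t j) * (g (i+1) - g i) := by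
  induction N, hl using Nat.le_induction with
  | base =>
      rw [Finset.sum_Ico_succ_top le_rfl, Finset.sum_range_succ t l]
      simp
  | succ N hN ih =>
      have hsplit : ∑ i ∈ Finset.Ico l (N+1),
          (∑ j ∈ Finset.range (N+2), t j - ∑ j ∈ Finset.range (i+1), t j) * (g (i+1) - g i)
          = ∑ i ∈ Finset.Ico l N,
              (∑ j ∈ Finset.range (N+2), t j - ∑ j ∈ Finset.range (i+1), t j) * (g (i+1) - g i)
            + (∑ j ∈ Finset.range (N+2), t j - ∑ j ∈ Finset.range (N+1), t j) * (g (N+1) - g N) :=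
        Finset.sum_Ico_succ_top hN _
      have hT : ∑ j ∈ Finset.range (N+2), t j = ∑ j ∈ Finset.range (N+1), t j + t (N+1) :=
        Finset.sum_range_succ t (N+1)
      have hmid : ∑ i ∈ Finset.Ico l N,
          (∑ j ∈ Finset.range (N+2), t j - ∑ j ∈ Finset.range (i+1), t j) * (g (i+1) - g i)
          = ∑ i ∈ Finset.Ico l N,
              (∑ j ∈ Finset.range (N+1), t j - ∑ j ∈ Finset.range (i+1), t j) * (g (i+1) - g i)
            + t (N+1) * (g N - g l) := by
        rw [← tele_aux g l N hN, Finset.mul_sum, ← Finset.sum_add_distrib]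
        refine Finset.sum_congr rfl fun i _ => by rw [hT]; ring
      rw [Finset.sum_Ico_succ_top (le_trans hN (Nat.le_succ N)), ih, hsplit, hmid, hT]
      ring

lemma slope_chain (f : ℝ → ℝ) (hf : ConvexOn ℝ Set.univ f) {u v w z : ℝ}
    (huv : u < v) (hvw : v ≤ w) (hwz : w < z) :
    (f v - f u) / (v - u) ≤ (f z - f w) / (z - w) := by
  have huz : u < z := lt_of_lt_of_le huv (le_trans hvw (le_of_lt hwz))
  have h1 : (f v - f u) / (v - u) ≤ (f z - f u) / (z - u) :=
    hf.secant_mono (Set.mem_univ u) (Set.mem_univ v) (Set.mem_univ z)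
      (ne_of_gt huv) (ne_of_gt huz) (le_trans hvw (le_of_lt hwz))
  have h2 : (f u - f z) / (u - z) ≤ (f w - f z) / (w - z) :=
    hf.secant_mono (Set.mem_univ z) (Set.mem_univ u) (Set.mem_univ w)
      (ne_of_lt huz) (ne_of_lt hwz) (le_trans (le_of_lt huv) hvw)
  have e1 : (f u - f z) / (u - z) = (f z - f u) / (z - u) := by
    rw [← neg_div_neg_eq]; ring_nf
  have e2 : (f w - f z) / (w - z) = (f z - f w) / (z - w) := by
    rw [← neg_div_neg_eq]; ring_nf
  calc (f v - f u) / (v - u) ≤ (f z - f u) / (z - u) := h1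
    _ = (f u - f z) / (u - z) := e1.symm
    _ ≤ (f w - f z) / (w - z) := h2
    _ = (f z - f w) / (z - w) := e2


lemma js_core (f : ℝ → ℝ) (hf : ConvexOn ℝ Set.univ f) (N : ℕ) (y t : ℕ → ℝ)
    (hy : ∀ i, i < N → y i ≤ y (i+1))
    (hS0 : ∀ j, j ≤ N + 1 → 0 ≤ ∑ i ∈ Finset.range j, t i)
    (hS1 : ∀ j, j ≤ N + 1 → ∑ i ∈ Finset.range j, t i ≤ ∑ i ∈ Finset.range (N+1), t i)
    (hT : 0 < ∑ i ∈ Finset.range (N+1), t i) :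
    (∑ i ∈ Finset.range (N+1), t i) *
        f ((∑ i ∈ Finset.range (N+1), t i * y i) / (∑ i ∈ Finset.range (N+1), t i))
      ≤ ∑ i ∈ Finset.range (N+1), t i * f (y i) := by
  classical
  set T := ∑ i ∈ Finset.range (N+1), t i with hTdef
  set Y := ∑ i ∈ Finset.range (N+1), t i * y i with hYdef
  set b := Y / T with hbdef
  have hTY : T * b = Y := by rw [hbdef, mul_div_assoc', mul_comm, mul_div_assoc, div_self (ne_of_gt hT), mul_one]
  clear_value T Y b
  -- monotonicity of y on [0, N]
  have ymono : ∀ i j, i ≤ j → j ≤ N → y i ≤ y j := by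
    intro i j hij hj
    induction j, hij using Nat.le_induction with
    | base => exact le_rfl
    | succ j hj' ih => exact le_trans (ih (by omega)) (hy j (by omega))
  -- Y ≤ T * y N
  have hub : Y ≤ T * y N := by
    have := abelF t y N
    have hsum : 0 ≤ ∑ i ∈ Finset.range N, (∑ j ∈ Finset.range (i+1), t j) * (y (i+1) - y i) := by
      refine Finset.sum_nonneg fun i hi => ?_
      have hi' := Finset.mem_range.mp hi
      exact mul_nonneg (hS0 (i+1) (by omega)) (by linarith [hy i hi'])
    rw [hYdef, this, ← hTdef]; linarith
  have hlb : T * y 0 ≤ Y := by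
    have hIco : ∑ i ∈ Finset.Ico 0 (N+1), t i * y i = Y := by
      rw [hYdef, Finset.range_eq_Ico]
    have := abelB t y 0 N (Nat.zero_le N)
    rw [hIco] at this
    have hsum : 0 ≤ ∑ i ∈ Finset.Ico 0 N,
        (∑ j ∈ Finset.range (N+1), t j - ∑ j ∈ Finset.range (i+1), t j) * (y (i+1) - y i) := by
      refine Finset.sum_nonneg fun i hi => ?_
      have hi' := (Finset.mem_Ico.mp hi).2
      exact mul_nonneg (by linarith [hS1 (i+1) (by omega)]) (by linarith [hy i hi'])
    simp only [Finset.range_zero, Finset.sum_empty, sub_zero] at this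
    rw [← hTdef] at this hsum
    linarith
  have hb_ub : b ≤ y N := by rw [hbdef, div_le_iff₀ hT]; linarith
  have hb_lb : y 0 ≤ b := by rw [hbdef, le_div_iff₀ hT]; linarith
  -- final algebraic identity helper
  have gsum : ∀ c : ℝ, ∑ i ∈ Finset.range (N+1), t i * (f (y i) - c * y i)
      = (∑ i ∈ Finset.range (N+1), t i * f (y i)) - c * Y := by
    intro c
    rw [hYdef, Finset.mul_sum, ← Finset.sum_sub_distrib]
    exact Finset.sum_congr rfl fun i _ => by ring
  rcases Nat.eq_zero_or_pos N with hN0 | hNpos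
  · subst hN0
    have hb0 : b = y 0 := le_antisymm hb_ub hb_lb
    rw [hb0, hTdef]
    simp
  set m := Nat.findGreatest (fun j => y j ≤ b) N with hmdef
  have hmle : m ≤ N := Nat.findGreatest_le N
  have hmP : y m ≤ b := Nat.findGreatest_spec (P := fun j => y j ≤ b) (Nat.zero_le N) hb_lb
  clear_value m
  rcases eq_or_lt_of_le hmle with hmN | hmN
  · -- m = N : b = y N
    have hbN : b = y N := le_antisymm hb_ub (hmN ▸ hmP)
    have hne : (Finset.range N).Nonempty := ⟨0, Finset.mem_range.mpr hNpos⟩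
    set c := (Finset.range N).sup' hne (fun i => (f (y (i+1)) - f (y i)) / (y (i+1) - y i)) with hcdef
    set g : ℕ → ℝ := fun i => f (y i) - c * y i with hgdef
    clear_value g
    have hdec : ∀ i, i < N → g (i+1) - g i ≤ 0 := by
      intro i hi
      rcases eq_or_lt_of_le (hy i hi) with heq | hlt
      · simp [hgdef, ← heq]
      · have hc : (f (y (i+1)) - f (y i)) / (y (i+1) - y i) ≤ c := by
          rw [hcdef]
          exact Finset.le_sup' (fun i => (f (y (i+1)) - f (y i)) / (y (i+1) - y i))
            (Finset.mem_range.mpr hi)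
        have := (div_le_iff₀ (by linarith : (0:ℝ) < y (i+1) - y i)).mp hc
        simp only [hgdef]; nlinarith
    have key := abelF t g N
    rw [← hTdef] at key
    have hsum : ∑ i ∈ Finset.range N, (∑ j ∈ Finset.range (i+1), t j) * (g (i+1) - g i) ≤ 0 := by
      refine Finset.sum_nonpos fun i hi => ?_
      have hi' := Finset.mem_range.mp hi
      exact mul_nonpos_of_nonneg_of_nonpos (hS0 (i+1) (by omega)) (hdec i hi')
    have h1 : T * g N ≤ ∑ i ∈ Finset.range (N+1), t i * g i := by rw [key]; linarith
    have h2 : ∑ i ∈ Finset.range (N+1), t i * g i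
        = (∑ i ∈ Finset.range (N+1), t i * f (y i)) - c * Y := by
      simp only [hgdef]; exact gsum c
    have h3 : T * g N = T * f b - c * Y := by
      simp only [hgdef, hbN]; rw [mul_sub, ← hbN, ← mul_assoc, mul_comm T c, mul_assoc, hTY]
    linarith
  · -- m < N
    have hbm1 : b < y (m+1) := by
      by_contra h
      have h2 : Nat.findGreatest (fun j => y j ≤ b) N < m + 1 := by
        rw [← hmdef]; exact Nat.lt_succ_self m
      exact Nat.findGreatest_is_greatest h2 (by omega) (not_lt.mp h)
    have hym : y m ≤ b := hmP
    have hymm1 : y m < y (m+1) := lt_of_le_of_lt hym hbm1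
    set c := (f (y (m+1)) - f (y m)) / (y (m+1) - y m) with hcdef
    set g : ℕ → ℝ := fun i => f (y i) - c * y i with hgdef
    clear_value c g
    set v := f b - c * b with hvdef
    clear_value v
    -- g decreasing below m
    have hdec : ∀ i, i < m → g (i+1) - g i ≤ 0 := by
      intro i hi
      rcases eq_or_lt_of_le (hy i (by omega)) with heq | hlt
      · simp [hgdef, ← heq]
      · have hle : y (i+1) ≤ y m := ymono (i+1) m hi (by omega)
        have hc : (f (y (i+1)) - f (y i)) / (y (i+1) - y i) ≤ c := by
          rw [hcdef]; exact slope_chain f hf hlt hle hymm1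
        have := (div_le_iff₀ (by linarith : (0:ℝ) < y (i+1) - y i)).mp hc
        simp only [hgdef]; nlinarith
    -- g increasing above m+1
    have hinc : ∀ i, m + 1 ≤ i → i < N → 0 ≤ g (i+1) - g i := by
      intro i hi1 hi2
      rcases eq_or_lt_of_le (hy i hi2) with heq | hlt
      · simp [hgdef, ← heq]
      · have hle : y (m+1) ≤ y i := ymono (m+1) i hi1 (by omega)
        have hc : c ≤ (f (y (i+1)) - f (y i)) / (y (i+1) - y i) := by
          rw [hcdef]; exact slope_chain f hf hymm1 hle hlt
        have := (le_div_iff₀ (by linarith : (0:ℝ) < y (i+1) - y i)).mp hc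
        simp only [hgdef]; nlinarith
    -- chord conditions
    have hgm : v ≤ g m := by
      rcases eq_or_lt_of_le hym with heq | hlt
      · simp [hvdef, hgdef, heq]
      · have hc : (f b - f (y m)) / (b - y m) ≤ (f (y (m+1)) - f (y m)) / (y (m+1) - y m) :=
          hf.secant_mono (Set.mem_univ (y m)) (Set.mem_univ b) (Set.mem_univ (y (m+1)))
            (ne_of_gt hlt) (ne_of_gt hymm1) (le_of_lt hbm1)
        have := (div_le_iff₀ (by linarith : (0:ℝ) < b - y m)).mp hc
        simp only [hvdef, hgdef, ← hcdef]; nlinarith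
    have hgm1 : v ≤ g (m+1) := by
      have hc : (f (y m) - f (y (m+1))) / (y m - y (m+1)) ≤ (f b - f (y (m+1))) / (b - y (m+1)) :=
        hf.secant_mono (Set.mem_univ (y (m+1))) (Set.mem_univ (y m)) (Set.mem_univ b)
          (ne_of_lt hymm1) (ne_of_lt hbm1) hym
      have hceq : c = (f (y m) - f (y (m+1))) / (y m - y (m+1)) := by
        rw [hcdef, ← neg_div_neg_eq]; ring_nf
      rw [← hceq] at hc
      have := (le_div_iff_of_neg (by linarith : b - y (m+1) < 0)).mp hc
      simp only [hvdef, hgdef]; nlinarith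
    -- Abel on the two blocks
    have habF := abelF t g m
    have hA1 : (∑ j ∈ Finset.range (m+1), t j) * g m ≤ ∑ i ∈ Finset.range (m+1), t i * g i := by
      rw [habF]
      have : ∑ i ∈ Finset.range m, (∑ j ∈ Finset.range (i+1), t j) * (g (i+1) - g i) ≤ 0 :=
        Finset.sum_nonpos fun i hi =>
          mul_nonpos_of_nonneg_of_nonpos (hS0 (i+1) (by
            have := Finset.mem_range.mp hi; omega)) (hdec i (Finset.mem_range.mp hi))
      linarith
    have habB := abelB t g (m+1) N hmN
    have hA2 : (T - ∑ j ∈ Finset.range (m+1), t j) * g (m+1)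
        ≤ ∑ i ∈ Finset.Ico (m+1) (N+1), t i * g i := by
      rw [habB]
      have : 0 ≤ ∑ i ∈ Finset.Ico (m+1) N,
          (∑ j ∈ Finset.range (N+1), t j - ∑ j ∈ Finset.range (i+1), t j) * (g (i+1) - g i) := by
        refine Finset.sum_nonneg fun i hi => ?_
        have hi' := Finset.mem_Ico.mp hi
        exact mul_nonneg (by linarith [hS1 (i+1) (by omega)]) (hinc i hi'.1 hi'.2)
      rw [← hTdef] at this ⊢; linarith
    have hsplit : ∑ i ∈ Finset.range (m+1), t i * g i + ∑ i ∈ Finset.Ico (m+1) (N+1), t i * g i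
        = ∑ i ∈ Finset.range (N+1), t i * g i :=
      Finset.sum_range_add_sum_Ico _ (by omega)
    have hSm0 : 0 ≤ ∑ j ∈ Finset.range (m+1), t j := hS0 (m+1) (by omega)
    have hSm1 : ∑ j ∈ Finset.range (m+1), t j ≤ T := hS1 (m+1) (by omega)
    have hcomb : T * v ≤ ∑ i ∈ Finset.range (N+1), t i * g i := by
      have e1 : (∑ j ∈ Finset.range (m+1), t j) * v ≤ (∑ j ∈ Finset.range (m+1), t j) * g m :=
        mul_le_mul_of_nonneg_left hgm hSm0
      have e2 : (T - ∑ j ∈ Finset.range (m+1), t j) * v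
          ≤ (T - ∑ j ∈ Finset.range (m+1), t j) * g (m+1) :=
        mul_le_mul_of_nonneg_left hgm1 (by linarith)
      nlinarith [hA1, hA2, hsplit]
    have h2 : ∑ i ∈ Finset.range (N+1), t i * g i
        = (∑ i ∈ Finset.range (N+1), t i * f (y i)) - c * Y := by
      simp only [hgdef]; exact gsum c
    have h3 : T * v = T * f b - c * Y := by
      rw [hvdef, mul_sub, ← mul_assoc, mul_comm T c, mul_assoc, hTY]
    linarith


lemma icc_shift (F : ℕ → ℝ) (a j : ℕ) :
    ∑ i ∈ Finset.Icc (a+1) (a+j), F i = ∑ i ∈ Finset.range j, F (a+1+i) := by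
  rw [← Finset.Ico_add_one_right_eq_Icc, Finset.sum_Ico_eq_sum_range]
  have h : a + j + 1 - (a+1) = j := by omega
  rw [h]

lemma convexOn_abs_rpow {q : ℝ} (hq : 1 ≤ q) :
    ConvexOn ℝ Set.univ (fun x : ℝ => |x| ^ q) := by
  have h := convexOn_rpow hq
  refine ⟨convex_univ, fun x _ z _ a bb ha hb hab => ?_⟩
  simp only [smul_eq_mul]
  calc |a * x + bb * z| ^ q ≤ (a * |x| + bb * |z|) ^ q := by
        apply Real.rpow_le_rpow (abs_nonneg _) ?_ (by linarith)
        calc |a * x + bb * z| ≤ |a * x| + |bb * z| := abs_add_le _ _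
          _ = a * |x| + bb * |z| := by
              rw [abs_mul, abs_mul, abs_of_nonneg ha, abs_of_nonneg hb]
    _ ≤ a * |x| ^ q + bb * |z| ^ q := by
        have := h.2 (x := |x|) (y := |z|) (Set.mem_Ici.mpr (abs_nonneg x))
          (Set.mem_Ici.mpr (abs_nonneg z)) ha hb hab
        simpa using this


/-- Theorem 7 of the paper: block average bound with Jensen–Steffensen type
coefficients (not necessarily nonnegative). -/
theorem stmt_9 (n : ℕ) (hn : 2 ≤ n) (k : ℕ) (hk1 : 1 ≤ k) (hkn : k ≤ n - 1)
    (y t : ℕ → ℝ)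
    (hymono : ∀ i, 1 ≤ i → i ≤ n - 1 → y i ≤ y (i + 1))
    (htsum : ∑ i ∈ Finset.Icc 1 n, t i = 1)
    (hzero : ∑ i ∈ Finset.Icc 1 n, t i * y i = 0)
    (hpartial : ∀ j, 1 ≤ j → j ≤ n →
      0 ≤ ∑ i ∈ Finset.Icc 1 j, t i ∧ ∑ i ∈ Finset.Icc 1 j, t i ≤ 1)
    (hmaxk : ∀ j, j ≤ k → ∑ i ∈ Finset.Icc 1 j, t i ≤ ∑ i ∈ Finset.Icc 1 k, t i)
    (htk1 : 0 < t (k + 1))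
    (hblock : ∀ l, k + 1 ≤ l → l ≤ n →
      0 ≤ ∑ i ∈ Finset.Icc (k + 1) l, t i ∧
        ∑ i ∈ Finset.Icc (k + 1) l, t i ≤ ∑ i ∈ Finset.Icc (k + 1) n, t i)
    (P : ℝ) (hP : P = ∑ i ∈ Finset.Icc 1 k, t i) (hP0 : 0 < P) (hP1 : P < 1)
    (r : ℝ) (hr : 1 ≤ r) :
    |(∑ i ∈ Finset.Icc 1 k, t i * y i) / P| ≤
      ((∑ i ∈ Finset.Icc 1 n, t i * |y i| ^ (2*r)) /
        (P + P ^ (2*r) * (1 - P) ^ (1 - 2*r))) ^ (1/(2*r)) := by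
  have hkn' : k + 1 ≤ n := by omega
  set q := 2 * r with hqdef
  have hq1 : 1 ≤ q := by rw [hqdef]; linarith
  have hq0 : 0 < q := by linarith
  set fq : ℝ → ℝ := fun x => |x| ^ q with hfqdef
  have hfq : ConvexOn ℝ Set.univ fq := convexOn_abs_rpow hq1
  have conv1 : ∀ (F : ℕ → ℝ) (j : ℕ),
      ∑ i ∈ Finset.Icc 1 j, F i = ∑ i ∈ Finset.range j, F (1+i) := by
    intro F j; simpa using icc_shift F 0 j
  have conv2 : ∀ (F : ℕ → ℝ) (j : ℕ),
      ∑ i ∈ Finset.Icc (k+1) (k+j), F i = ∑ i ∈ Finset.range j, F (k+1+i) :=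
    fun F j => icc_shift F k j
  -- sums split at k
  have hsplit : ∀ F : ℕ → ℝ,
      ∑ i ∈ Finset.Icc 1 k, F i + ∑ i ∈ Finset.Icc (k+1) n, F i
        = ∑ i ∈ Finset.Icc 1 n, F i := by
    intro F
    have h1 : Finset.Icc 1 k = Finset.Ioc 0 k := by rw [← Finset.Icc_add_one_left_eq_Ioc]; rfl
    have h2 : Finset.Icc (k+1) n = Finset.Ioc k n := by rw [← Finset.Icc_add_one_left_eq_Ioc]
    have h3 : Finset.Icc 1 n = Finset.Ioc 0 n := by rw [← Finset.Icc_add_one_left_eq_Ioc]; rfl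
    rw [h1, h2, h3]
    exact Finset.sum_Ioc_consecutive F (Nat.zero_le k) (by omega)
  set A := ∑ i ∈ Finset.Icc 1 k, t i * y i with hAdef
  set B := ∑ i ∈ Finset.Icc (k+1) n, t i * y i with hBdef
  set Q := ∑ i ∈ Finset.Icc (k+1) n, t i with hQdef
  have hQP : Q = 1 - P := by
    have := hsplit t
    rw [htsum, ← hP] at this
    linarith
  have hQ0 : 0 < Q := by rw [hQP]; linarith
  have hAB : A + B = 0 := by rw [hAdef, hBdef, hsplit (fun i => t i * y i), hzero]
  -- Block 1 Jensen-Steffensen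
  obtain ⟨K, hKk⟩ : ∃ K, k = K + 1 := ⟨k - 1, by omega⟩
  have hJ1 : P * fq (A / P) ≤ ∑ i ∈ Finset.Icc 1 k, t i * fq (y i) := by
    have hy1 : ∀ i, i < K → y (1+i) ≤ y (1+i+1) := by
      intro i hi
      have := hymono (1+i) (by omega) (by omega)
      simpa [add_comm, add_assoc, add_left_comm] using this
    have hS0 : ∀ j, j ≤ K + 1 → 0 ≤ ∑ i ∈ Finset.range j, t (1+i) := by
      intro j hj
      rw [← conv1 t j]
      rcases Nat.eq_zero_or_pos j with h | h
      · subst h; simp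
      · exact (hpartial j h (by omega)).1
    have hS1 : ∀ j, j ≤ K + 1 →
        ∑ i ∈ Finset.range j, t (1+i) ≤ ∑ i ∈ Finset.range (K+1), t (1+i) := by
      intro j hj
      rw [← conv1 t j, ← conv1 t (K+1), ← hKk]
      exact hmaxk j (by omega)
    have hTpos : 0 < ∑ i ∈ Finset.range (K+1), t (1+i) := by
      rw [← conv1 t (K+1), ← hKk, ← hP]; exact hP0
    have := js_core fq hfq K (fun i => y (1+i)) (fun i => t (1+i)) hy1 hS0 hS1 hTpos
    rw [← conv1 t (K+1), ← conv1 (fun i => t i * y i) (K+1),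
      ← conv1 (fun i => t i * fq (y i)) (K+1), ← hKk, ← hP, ← hAdef] at this
    exact this
  -- Block 2 Jensen-Steffensen
  obtain ⟨M, hMn⟩ : ∃ M, n = k + (M + 1) := ⟨n - k - 1, by omega⟩
  have hJ2 : Q * fq (B / Q) ≤ ∑ i ∈ Finset.Icc (k+1) n, t i * fq (y i) := by
    have hy2 : ∀ i, i < M → y (k+1+i) ≤ y (k+1+i+1) := by
      intro i hi
      exact hymono (k+1+i) (by omega) (by omega)
    have hS0 : ∀ j, j ≤ M + 1 → 0 ≤ ∑ i ∈ Finset.range j, t (k+1+i) := by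
      intro j hj
      rw [← conv2 t j]
      rcases Nat.eq_zero_or_pos j with h | h
      · subst h; simp
      · exact (hblock (k+j) (by omega) (by omega)).1
    have hS1 : ∀ j, j ≤ M + 1 →
        ∑ i ∈ Finset.range j, t (k+1+i) ≤ ∑ i ∈ Finset.range (M+1), t (k+1+i) := by
      intro j hj
      rw [← conv2 t j, ← conv2 t (M+1), ← hMn]
      rcases Nat.eq_zero_or_pos j with h | h
      · subst h
        simp only [Finset.Icc_self, Nat.add_zero]
        have h0 : Finset.Icc (k+1) k = (∅ : Finset ℕ) := by
          apply Finset.Icc_eq_empty; omega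
        rw [h0, Finset.sum_empty]
        exact (hblock n (by omega) le_rfl).1
      · exact (hblock (k+j) (by omega) (by omega)).2
    have hTpos : 0 < ∑ i ∈ Finset.range (M+1), t (k+1+i) := by
      rw [← conv2 t (M+1), ← hMn, ← hQdef]; exact hQ0
    have := js_core fq hfq M (fun i => y (k+1+i)) (fun i => t (k+1+i)) hy2 hS0 hS1 hTpos
    rw [← conv2 t (M+1), ← conv2 (fun i => t i * y i) (M+1),
      ← conv2 (fun i => t i * fq (y i)) (M+1), ← hMn, ← hQdef, ← hBdef] at this
    exact this
  -- assemble
  set Stot := ∑ i ∈ Finset.Icc 1 n, t i * |y i| ^ q with hSdef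
  have hStot : P * fq (A / P) + Q * fq (B / Q) ≤ Stot := by
    have := hsplit (fun i => t i * fq (y i))
    have he : (∑ i ∈ Finset.Icc 1 n, t i * fq (y i)) = Stot := rfl
    rw [he] at this
    linarith [hJ1, hJ2]
  have hBA : B = -A := by linarith
  -- rpow computations
  have habsA : (0:ℝ) ≤ |A| := abs_nonneg A
  have hfqAP : fq (A / P) = |A| ^ q / P ^ q := by
    rw [hfqdef]
    simp only
    rw [abs_div, abs_of_pos hP0, Real.div_rpow habsA (le_of_lt hP0)]
  have hfqBQ : fq (B / Q) = |A| ^ q / Q ^ q := by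
    rw [hfqdef, hBA]
    simp only
    rw [abs_div, abs_neg, abs_of_pos hQ0, Real.div_rpow habsA (le_of_lt hQ0)]
  have hPq : (0:ℝ) < P ^ q := Real.rpow_pos_of_pos hP0 q
  have hQq : (0:ℝ) < Q ^ q := Real.rpow_pos_of_pos hQ0 q
  have hQ1mq : (0:ℝ) < (1 - P) ^ (1 - q) := Real.rpow_pos_of_pos (by linarith) _
  have hD : (0:ℝ) < P + P ^ q * (1 - P) ^ (1 - q) := by positivity
  -- key: |A|^q/P^q * D ≤ Stot
  have hQ    : (1 - P) = Q := hQP.symm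
  have hkey : |A| ^ q / P ^ q * (P + P ^ q * (1 - P) ^ (1 - q)) ≤ Stot := by
    have e1 : (1 - P) ^ (1 - q) = Q / Q ^ q := by
      rw [hQ, Real.rpow_sub hQ0, Real.rpow_one]
    have expand : |A| ^ q / P ^ q * (P + P ^ q * (1 - P) ^ (1 - q))
        = P * (|A| ^ q / P ^ q) + Q * (|A| ^ q / Q ^ q) := by
      rw [e1]; field_simp
    rw [expand, ← hfqAP, ← hfqBQ]
    exact hStot
  have hkey2 : |A / P| ^ q ≤ Stot / (P + P ^ q * (1 - P) ^ (1 - q)) := by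
    rw [le_div_iff₀ hD, abs_div, abs_of_pos hP0, Real.div_rpow habsA (le_of_lt hP0)]
    exact hkey
  -- take q-th roots
  have hXnn : (0:ℝ) ≤ |A / P| := abs_nonneg _
  calc |A / P| = (|A / P| ^ q) ^ (1 / q) := by
        rw [← Real.rpow_mul hXnn, mul_one_div_cancel (ne_of_gt hq0), Real.rpow_one]
    _ ≤ (Stot / (P + P ^ q * (1 - P) ^ (1 - q))) ^ (1 / q) :=
        Real.rpow_le_rpow (Real.rpow_nonneg hXnn q) hkey2 (by positivity)
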